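/- arXiv:1505.04662 — 9 statements merged into one kernel-verified Lean document; each statement's English description precedes it below -/
import Mathlib

section
/- If a length space (X,d) has bounded growth at some scale (there exist R > r > 0 and N ∈ ℕ such that every open ball of radius R can be covered by N open balls of radius r), then X is uniformly coarsely proper: there exist N : (0,∞)×(0,∞) → ℕ and r_b > 0 such that for all R > r > r_b, every open ball of radius R can be covered by N(R,r) open balls of radius r. -/
open Metric

private lemma length_mid {X : Type*} [MetricSpace X]
    (hlength : ∀ x y : X, ∀ ε > (0:ℝ), ∃ f : ℝ → X, f 0 = x ∧ f 1 = y ∧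
      ∀ s ∈ Set.Icc (0:ℝ) 1, ∀ t ∈ Set.Icc (0:ℝ) 1,
        dist (f s) (f t) ≤ (dist x y + ε) * |s - t|)
    (x z : X) (a b : ℝ) (ha : 0 < a) (hb : 0 < b) (hd : dist x z < a + b) :
    ∃ y : X, dist x y < a ∧ dist y z < b := by
  set ε := (a + b - dist x z) / 2 with hε
  have hε0 : 0 < ε := by rw [hε]; linarith
  obtain ⟨f, hf0, hf1, hf⟩ := hlength x z ε hε0
  set L := dist x z + ε with hL
  have hL0 : 0 < L := by have := dist_nonneg (x := x) (y := z); positivity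
  have hLab : L < a + b := by
    have : dist x z < a + b := hd
    simp only [hL, hε]; linarith
  set t := a / (a + b) with ht
  have hab : 0 < a + b := by linarith
  have ht0 : 0 ≤ t := by positivity
  have ht1 : t ≤ 1 := by rw [ht, div_le_one hab]; linarith
  refine ⟨f t, ?_, ?_⟩
  · have h1 := hf 0 ⟨le_refl 0, zero_le_one⟩ t ⟨ht0, ht1⟩
    rw [hf0] at h1
    have : |0 - t| = t := by rw [abs_sub_comm]; simp [abs_of_nonneg ht0]
    rw [this] at h1
    calc dist x (f t) ≤ L * t := h1
      _ < (a + b) * (a / (a + b)) := by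
          apply mul_lt_mul_of_pos_right hLab; rw [ht]; positivity
      _ = a := by field_simp
  · have h1 := hf t ⟨ht0, ht1⟩ 1 ⟨zero_le_one, le_refl 1⟩
    rw [hf1] at h1
    have habs : |t - 1| = 1 - t := by rw [abs_sub_comm, abs_of_nonneg (by linarith)]
    rw [habs] at h1
    have h1t : 1 - t = b / (a + b) := by rw [ht]; field_simp; ring
    calc dist (f t) z ≤ L * (1 - t) := h1
      _ < (a + b) * (b / (a + b)) := by
          rw [h1t]; apply mul_lt_mul_of_pos_right hLab; positivity
      _ = b := by field_simp

/-- If a length space has bounded growth at some scale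
(there are `R > r > 0` and `N` such that every open ball of radius `R` is covered by `N`
open balls of radius `r`), then it is uniformly coarsely proper. -/
theorem lengthSpace_boundedGrowth_uniformlyCoarselyProper {X : Type*} [MetricSpace X]
    (hlength : ∀ x y : X, ∀ ε > (0:ℝ), ∃ f : ℝ → X, f 0 = x ∧ f 1 = y ∧
      ∀ s ∈ Set.Icc (0:ℝ) 1, ∀ t ∈ Set.Icc (0:ℝ) 1,
        dist (f s) (f t) ≤ (dist x y + ε) * |s - t|)
    (R r : ℝ) (N : ℕ) (hr : 0 < r) (hRr : r < R)
    (hcov : ∀ x : X, ∃ c : Finset X, c.card ≤ N ∧ ball x R ⊆ ⋃ y ∈ c, ball y r) :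
    ∃ (N' : ℝ → ℝ → ℕ) (rb : ℝ), 0 < rb ∧ ∀ R' r', rb < r' → r' < R' →
      ∀ x : X, ∃ c : Finset X, c.card ≤ N' R' r' ∧ ball x R' ⊆ ⋃ y ∈ c, ball y r' := by
  classical
  choose g hg1 hg2 using hcov
  -- induction: balls of radius R + k(R-r) covered by N^(k+1) balls of radius r
  have key : ∀ k : ℕ, ∀ x : X, ∃ c : Finset X, c.card ≤ N ^ (k + 1) ∧
      ball x (R + k * (R - r)) ⊆ ⋃ y ∈ c, ball y r := by
    intro k
    induction k with
    | zero =>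
      intro x
      refine ⟨g x, ?_, ?_⟩
      · simpa using hg1 x
      · simpa using hg2 x
    | succ k ih =>
      intro x
      obtain ⟨c, hc1, hc2⟩ := ih x
      refine ⟨c.biUnion g, ?_, ?_⟩
      · calc (c.biUnion g).card ≤ ∑ y ∈ c, (g y).card := Finset.card_biUnion_le
          _ ≤ ∑ y ∈ c, N := Finset.sum_le_sum (fun y _ => hg1 y)
          _ = c.card * N := by simp [mul_comm]
          _ ≤ N ^ (k + 1) * N := Nat.mul_le_mul_right N hc1
          _ = N ^ (k + 1 + 1) := by ring
      · intro z hz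
        rw [mem_ball, dist_comm] at hz
        have hz' : dist x z < (R + k * (R - r)) + (R - r) := by
          push_cast at hz ⊢; linarith
        obtain ⟨y, hy1, hy2⟩ := length_mid hlength x z (R + k * (R - r)) (R - r)
          (by have : (0:ℝ) ≤ k := Nat.cast_nonneg k; nlinarith) (by linarith) hz'
        have hyc : y ∈ ⋃ w ∈ c, ball w r := hc2 (by rwa [mem_ball, dist_comm])
        simp only [Set.mem_iUnion, mem_ball] at hyc
        obtain ⟨w, hwc, hyw⟩ := hyc
        have hzw : z ∈ ball w R := by
          rw [mem_ball, dist_comm]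
          calc dist w z ≤ dist w y + dist y z := dist_triangle _ _ _
            _ < r + (R - r) := by rw [dist_comm w y]; exact add_lt_add hyw hy2
            _ = R := by ring
        have := hg2 w hzw
        simp only [Set.mem_iUnion, mem_ball] at this ⊢
        obtain ⟨v, hv1, hv2⟩ := this
        exact ⟨v, Finset.mem_biUnion.2 ⟨w, hwc, hv1⟩, hv2⟩
  refine ⟨fun R' r' => N ^ (⌈(R' - R) / (R - r)⌉₊ + 1), r, hr, ?_⟩
  intro R' r' hrr' hR'r' x
  set k := ⌈(R' - R) / (R - r)⌉₊ with hk
  obtain ⟨c, hc1, hc2⟩ := key k x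
  refine ⟨c, hc1, ?_⟩
  have hRk : R' ≤ R + k * (R - r) := by
    have h1 : (R' - R) / (R - r) ≤ (k : ℝ) := Nat.le_ceil _
    have h2 : R' - R ≤ k * (R - r) := by
      rw [div_le_iff₀ (by linarith : (0:ℝ) < R - r)] at h1; linarith
    linarith
  calc ball x R' ⊆ ball x (R + k * (R - r)) := ball_subset_ball hRk
    _ ⊆ ⋃ y ∈ c, ball y r := hc2
    _ ⊆ ⋃ y ∈ c, ball y r' := Set.iUnion₂_mono fun y _ => ball_subset_ball (le_of_lt hrr')
end

section
/- In a length space with bounded growth at scale R > r > 0 with covering constant N, for every n ∈ ℕ and every point x, the ball B(x, (n+1)R − nr) can be covered by N^{n+1} open balls of radius r. -/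
open Metric

/-- In a length space with bounded growth at scale `R > r > 0` with
covering constant `N`, for every `n ∈ ℕ` and every point `x`, the ball
`B(x, (n+1)R − nr)` can be covered by `N^(n+1)` open balls of radius `r`. -/
theorem lengthSpace_boundedGrowth_iterate {X : Type*} [MetricSpace X]
    (hlength : ∀ x y : X, ∀ ε > (0:ℝ), ∃ f : ℝ → X, f 0 = x ∧ f 1 = y ∧
      ∀ s ∈ Set.Icc (0:ℝ) 1, ∀ t ∈ Set.Icc (0:ℝ) 1,
        dist (f s) (f t) ≤ (dist x y + ε) * |s - t|)
    (R r : ℝ) (N : ℕ) (hr : 0 < r) (hRr : r < R)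
    (hcov : ∀ x : X, ∃ c : Finset X, c.card ≤ N ∧ ball x R ⊆ ⋃ y ∈ c, ball y r) :
    ∀ (n : ℕ) (x : X), ∃ c : Finset X, c.card ≤ N ^ (n + 1) ∧
      ball x ((n + 1) * R - n * r) ⊆ ⋃ y ∈ c, ball y r := by
  classical
  intro n
  induction n with
  | zero =>
    intro x
    obtain ⟨c, hc, hcov'⟩ := hcov x
    refine ⟨c, by simpa using hc, ?_⟩
    have : ((0:ℕ) + 1 : ℝ) * R - (0:ℕ) * r = R := by push_cast; ring
    rw [this]
    exact hcov'
  | succ n ih =>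
    intro x
    obtain ⟨c, hc, hsub⟩ := ih x
    choose g hg1 hg2 using hcov
    refine ⟨c.biUnion (fun y => g y), ?_, ?_⟩
    · calc (c.biUnion fun y => g y).card
          ≤ ∑ y ∈ c, (g y).card := Finset.card_biUnion_le
        _ ≤ ∑ _y ∈ c, N := Finset.sum_le_sum fun y _ => hg1 y
        _ = c.card * N := by simp [Finset.sum_const]
        _ ≤ N ^ (n + 1) * N := Nat.mul_le_mul_right N hc
        _ = N ^ (n + 1 + 1) := (pow_succ N (n + 1)).symm
    · intro z hz
      set A : ℝ := (n + 1) * R - n * r with hA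
      have hA0 : 0 < A := by
        have : (0:ℝ) ≤ (n:ℝ) := Nat.cast_nonneg n
        nlinarith
      have hD : dist x z < A + (R - r) := by
        have h := mem_ball'.mp hz
        push_cast at h
        rw [hA]
        linarith
      set D := dist x z with hDdef
      set ε : ℝ := (A + (R - r) - D) / 2 with hε
      have hε0 : 0 < ε := by rw [hε]; linarith
      have hDε : D + ε < A + (R - r) := by rw [hε]; linarith
      obtain ⟨f, hf0, hf1, hflip⟩ := hlength x z ε hε0
      set t : ℝ := A / (A + (R - r)) with ht
      have hden : 0 < A + (R - r) := by linarith
      have ht0 : 0 < t := div_pos hA0 hden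
      have ht1 : t < 1 := (div_lt_one hden).mpr (by linarith)
      have htmem : t ∈ Set.Icc (0:ℝ) 1 := ⟨le_of_lt ht0, le_of_lt ht1⟩
      have h0mem : (0:ℝ) ∈ Set.Icc (0:ℝ) 1 := ⟨le_refl _, zero_le_one⟩
      have h1mem : (1:ℝ) ∈ Set.Icc (0:ℝ) 1 := ⟨zero_le_one, le_refl _⟩
      have hDε0 : 0 ≤ D + ε := by positivity
      -- f t is close to x
      have hxw : dist x (f t) < A := by
        have h := hflip 0 h0mem t htmem
        rw [hf0] at h
        have habs : |0 - t| = t := by rw [abs_sub_comm, sub_zero, abs_of_pos ht0]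
        rw [habs] at h
        calc dist x (f t) ≤ (D + ε) * t := h
          _ < (A + (R - r)) * t := by
              exact mul_lt_mul_of_pos_right hDε ht0
          _ = A := by rw [ht]; field_simp
      -- f t is close to z
      have hwz : dist (f t) z < R - r := by
        have h := hflip t htmem 1 h1mem
        rw [hf1] at h
        have habs : |t - 1| = 1 - t := by rw [abs_sub_comm, abs_of_pos (by linarith)]
        rw [habs] at h
        calc dist (f t) z ≤ (D + ε) * (1 - t) := h
          _ < (A + (R - r)) * (1 - t) := mul_lt_mul_of_pos_right hDε (by linarith)
          _ = R - r := by rw [ht]; field_simp; ring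
      -- find center y
      have hw : f t ∈ ⋃ y ∈ c, ball y r := hsub (mem_ball'.mpr hxw)
      simp only [Set.mem_iUnion, exists_prop] at hw
      obtain ⟨y, hyc, hwy⟩ := hw
      have hyz : dist z y < R := by
        have := mem_ball.mp hwy
        calc dist z y ≤ dist z (f t) + dist (f t) y := dist_triangle _ _ _
          _ < (R - r) + r := by rw [dist_comm z (f t)]; exact add_lt_add hwz this
          _ = R := by ring
      have hz2 : z ∈ ⋃ w ∈ g y, ball w r := hg2 y (mem_ball.mpr hyz)
      simp only [Set.mem_iUnion, exists_prop] at hz2 ⊢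
      obtain ⟨w, hwgy, hzw⟩ := hz2
      exact ⟨w, Finset.mem_biUnion.mpr ⟨y, hyc, hwgy⟩, hzw⟩
end

section
/- If f : X → X' is a (λ,μ)-quasi-isometry and (X,d) is uniformly coarsely proper at scales R > r > r_b, then (X',d') is uniformly coarsely proper at scales R' > r' > λμ + μ + r_b λ. -/
open Metric

/-- If `f : X → X'` is a `(λ,μ)`-quasi-isometry and `X` is uniformly
coarsely proper at scales `R > r > r_b`, then `X'` is uniformly coarsely proper at
scales `R' > r' > λμ + μ + r_b·λ`. -/
theorem uniformlyCoarselyProper_of_quasiIsometry {X X' : Type*} [MetricSpace X]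
    [MetricSpace X'] (f : X → X') (lam μ : ℝ) (hlam : 1 ≤ lam) (hμ : 0 ≤ μ)
    (hqi : ∀ x y : X, lam⁻¹ * dist x y - μ ≤ dist (f x) (f y) ∧
      dist (f x) (f y) ≤ lam * dist x y + μ)
    (hsurj : ∀ x' : X', ∃ x : X, dist x' (f x) ≤ μ)
    (N : ℝ → ℝ → ℕ) (rb : ℝ) (hrb : 0 < rb)
    (hX : ∀ R r, rb < r → r < R →
      ∀ x : X, ∃ c : Finset X, c.card ≤ N R r ∧ ball x R ⊆ ⋃ y ∈ c, ball y r) :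
    ∃ N' : ℝ → ℝ → ℕ, ∀ R' r', lam * μ + μ + rb * lam < r' → r' < R' →
      ∀ x' : X', ∃ c : Finset X', c.card ≤ N' R' r' ∧ ball x' R' ⊆ ⋃ y ∈ c, ball y r' := by
  classical
  have hlam0 : (0:ℝ) < lam := lt_of_lt_of_le one_pos hlam
  refine ⟨fun R' r' => N (lam * (R' + 3 * μ) + 1) ((r' - 2 * μ) / lam), ?_⟩
  intro R' r' hr' hR' x'
  set r : ℝ := (r' - 2 * μ) / lam with hr_def
  set R : ℝ := lam * (R' + 3 * μ) + 1 with hR_def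
  have hrbr : rb < r := by
    rw [hr_def, lt_div_iff₀ hlam0]
    nlinarith
  have hr0 : 0 < r := lt_trans hrb hrbr
  have hrr' : r ≤ r' := by
    rw [hr_def, div_le_iff₀ hlam0]
    nlinarith [mul_pos hrb hlam0, mul_nonneg hμ (sub_nonneg.mpr hlam)]
  have hrR : r < R := by
    have : r' < R := by rw [hR_def]; nlinarith
    linarith
  obtain ⟨x, hx⟩ := hsurj x'
  obtain ⟨c, hcard, hcov⟩ := hX R r hrbr hrR x
  refine ⟨c.image f, le_trans (Finset.card_image_le) hcard, ?_⟩
  intro z' hz'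
  simp only [mem_ball] at hz'
  obtain ⟨z, hz⟩ := hsurj z'
  have hfxz : dist (f x) (f z) < R' + 2 * μ := by
    calc dist (f x) (f z) ≤ dist (f x) x' + dist x' z' + dist z' (f z) := dist_triangle4 _ _ _ _
      _ < μ + R' + μ := by
          have h1 : dist (f x) x' ≤ μ := dist_comm x' (f x) ▸ hx
          have h2 : dist x' z' < R' := dist_comm z' x' ▸ hz'
          linarith
      _ = R' + 2 * μ := by ring
  have hxz : dist x z < R := by
    have h1 := (hqi x z).1
    have : lam⁻¹ * dist x z < R' + 3 * μ := by linarith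
    rw [hR_def]
    have := (mul_lt_mul_iff_right₀ hlam0).mpr this
    rw [← mul_assoc, mul_inv_cancel₀ (ne_of_gt hlam0), one_mul] at this
    linarith
  have hzball : z ∈ ⋃ y ∈ c, ball y r := hcov (mem_ball.mpr (dist_comm x z ▸ hxz))
  simp only [Set.mem_iUnion, mem_ball] at hzball
  obtain ⟨y, hy, hzy⟩ := hzball
  simp only [Set.mem_iUnion, mem_ball, Finset.mem_image]
  refine ⟨f y, ⟨y, hy, rfl⟩, ?_⟩
  have h2 := (hqi z y).2
  calc dist z' (f y) ≤ dist z' (f z) + dist (f z) (f y) := dist_triangle _ _ _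
    _ ≤ μ + (lam * dist z y + μ) := add_le_add hz h2
    _ < μ + (lam * r + μ) := by
        have := (mul_lt_mul_iff_right₀ hlam0).mpr hzy
        linarith
    _ = r' := by rw [hr_def]; field_simp; ring
end

section
/- The function ρ on H(Z) = Z × [0,∞) defined by ρ((x,t),(y,s)) = 2 log((d(x,y) + max{e^{−t}, e^{−s}}·D)/(e^{−(s+t)/2}·D)), where D = diam(Z) > 0, is a metric on H(Z). -/
open Metric

/-- The hyperbolic cone "metric" on `H(Z) = Z × [0,∞)`:
`ρ((x,t),(y,s)) = 2 log((d(x,y) + max{e^{−t}, e^{−s}}·D)/(e^{−(s+t)/2}·D))`. -/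
noncomputable def hypConeRho {Z : Type*} [MetricSpace Z] (D : ℝ) (p q : Z × ℝ) : ℝ :=
  2 * Real.log ((dist p.1 q.1 + max (Real.exp (-p.2)) (Real.exp (-q.2)) * D) /
    (Real.exp (-(p.2 + q.2) / 2) * D))

private lemma max_exp_ge (t s : ℝ) :
    Real.exp (-(t + s) / 2) ≤ max (Real.exp (-t)) (Real.exp (-s)) := by
  rcases le_total t s with h | h
  · exact le_trans (Real.exp_le_exp.mpr (by linarith)) (le_max_left _ _)
  · exact le_trans (Real.exp_le_exp.mpr (by linarith)) (le_max_right _ _)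

private lemma hypCone_keyineq (D d1 d2 d3 a b c : ℝ) (hD : 0 < D)
    (hd2 : 0 ≤ d2) (hd3 : 0 ≤ d3) (htri : d1 ≤ d2 + d3)
    (hb : 0 < b) (hc : 0 < c) :
    (d1 + max a b * D) * c * D ≤ (d2 + max a c * D) * (d3 + max c b * D) := by
  have h1 : c * max a b ≤ max a c * max c b := by
    rcases le_total a b with h | h
    · rw [max_eq_right h]
      calc c * b ≤ max a c * b := mul_le_mul_of_nonneg_right (le_max_right _ _) hb.le
        _ ≤ max a c * max c b :=
          mul_le_mul_of_nonneg_left (le_max_right _ _) (le_trans hc.le (le_max_right a c))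
    · rw [max_eq_left h]
      calc c * a = a * c := mul_comm _ _
        _ ≤ max a c * c := mul_le_mul_of_nonneg_right (le_max_left _ _) hc.le
        _ ≤ max a c * max c b :=
          mul_le_mul_of_nonneg_left (le_max_left _ _) (le_trans hc.le (le_max_right a c))
  have h2 : c ≤ max a c := le_max_right _ _
  have h3 : c ≤ max c b := le_max_left _ _
  nlinarith [mul_nonneg hd2 hd3,
    mul_le_mul_of_nonneg_right h2 (mul_nonneg hd3 hD.le),
    mul_le_mul_of_nonneg_right h3 (mul_nonneg hd2 hD.le),
    mul_le_mul_of_nonneg_right h1 (mul_pos hD hD).le,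
    mul_le_mul_of_nonneg_right htri (mul_pos hc hD).le]

/-- The function `ρ` is a metric on `H(Z) = Z × [0,∞)`,
where `D = diam Z > 0`. -/
theorem hypConeRho_is_metric {Z : Type*} [MetricSpace Z]
    (hbdd : Bornology.IsBounded (Set.univ : Set Z)) (a b : Z) (hab : a ≠ b)
    (D : ℝ) (hD : D = Metric.diam (Set.univ : Set Z)) :
    (∀ p q : Z × ℝ, 0 ≤ p.2 → 0 ≤ q.2 → 0 ≤ hypConeRho D p q) ∧
    (∀ p q : Z × ℝ, 0 ≤ p.2 → 0 ≤ q.2 → (hypConeRho D p q = 0 ↔ p = q)) ∧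
    (∀ p q : Z × ℝ, hypConeRho D p q = hypConeRho D q p) ∧
    (∀ p q w : Z × ℝ, 0 ≤ p.2 → 0 ≤ q.2 → 0 ≤ w.2 →
      hypConeRho D p q ≤ hypConeRho D p w + hypConeRho D w q) := by
  have hD0 : 0 < D := by
    rw [hD]
    exact lt_of_lt_of_le (dist_pos.mpr hab)
      (Metric.dist_le_diam_of_mem hbdd (Set.mem_univ a) (Set.mem_univ b))
  have hden : ∀ p q : Z × ℝ, 0 < Real.exp (-(p.2 + q.2) / 2) * D :=
    fun p q => mul_pos (Real.exp_pos _) hD0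
  have hratio : ∀ p q : Z × ℝ,
      1 ≤ (dist p.1 q.1 + max (Real.exp (-p.2)) (Real.exp (-q.2)) * D) /
        (Real.exp (-(p.2 + q.2) / 2) * D) := by
    intro p q
    rw [le_div_iff₀ (hden p q), one_mul]
    have h1 := max_exp_ge p.2 q.2
    nlinarith [dist_nonneg (x := p.1) (y := q.1),
      mul_le_mul_of_nonneg_right h1 hD0.le]
  have hpos : ∀ p q : Z × ℝ,
      0 < (dist p.1 q.1 + max (Real.exp (-p.2)) (Real.exp (-q.2)) * D) /
        (Real.exp (-(p.2 + q.2) / 2) * D) :=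
    fun p q => lt_of_lt_of_le one_pos (hratio p q)
  refine ⟨?_, ?_, ?_, ?_⟩
  · intro p q _ _
    have := Real.log_nonneg (hratio p q)
    unfold hypConeRho
    linarith
  · intro p q _ _
    constructor
    · intro h
      have hlog : Real.log ((dist p.1 q.1 + max (Real.exp (-p.2)) (Real.exp (-q.2)) * D) /
          (Real.exp (-(p.2 + q.2) / 2) * D)) = 0 := by
        unfold hypConeRho at h; linarith
      have hone : (dist p.1 q.1 + max (Real.exp (-p.2)) (Real.exp (-q.2)) * D) /
          (Real.exp (-(p.2 + q.2) / 2) * D) = 1 := by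
        rcases Real.log_eq_zero.mp hlog with h0 | h0 | h0
        · exact absurd h0 (ne_of_gt (hpos p q))
        · exact h0
        · nlinarith [hpos p q]
      rw [div_eq_one_iff_eq (ne_of_gt (hden p q))] at hone
      have h1 := max_exp_ge p.2 q.2
      have hdnn : 0 ≤ dist p.1 q.1 := dist_nonneg
      have hmaxeq : max (Real.exp (-p.2)) (Real.exp (-q.2)) = Real.exp (-(p.2 + q.2) / 2) := by
        nlinarith [mul_le_mul_of_nonneg_right h1 hD0.le]
      have hd0 : dist p.1 q.1 = 0 := by
        nlinarith [mul_le_mul_of_nonneg_right h1 hD0.le]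
      have hts : p.2 = q.2 := by
        by_contra hne
        rcases lt_or_gt_of_ne hne with hlt | hlt
        · have : Real.exp (-(p.2 + q.2) / 2) < Real.exp (-p.2) :=
            Real.exp_lt_exp.mpr (by linarith)
          have h2 : Real.exp (-p.2) ≤ max (Real.exp (-p.2)) (Real.exp (-q.2)) := le_max_left _ _
          linarith [hmaxeq ▸ h2]
        · have : Real.exp (-(p.2 + q.2) / 2) < Real.exp (-q.2) :=
            Real.exp_lt_exp.mpr (by linarith)
          have h2 : Real.exp (-q.2) ≤ max (Real.exp (-p.2)) (Real.exp (-q.2)) := le_max_right _ _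
          linarith [hmaxeq ▸ h2]
      exact Prod.ext (dist_eq_zero.mp hd0) hts
    · intro h
      subst h
      unfold hypConeRho
      have h1 : -(p.2 + p.2) / 2 = -p.2 := by ring
      rw [dist_self, max_self, zero_add, h1, div_self (ne_of_gt (mul_pos (Real.exp_pos _) hD0)),
        Real.log_one, mul_zero]
  · intro p q
    unfold hypConeRho
    rw [dist_comm, max_comm, add_comm p.2 q.2]
  · intro p q w _ _ _
    set A := (dist p.1 q.1 + max (Real.exp (-p.2)) (Real.exp (-q.2)) * D) /
        (Real.exp (-(p.2 + q.2) / 2) * D) with hAdef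
    set B := (dist p.1 w.1 + max (Real.exp (-p.2)) (Real.exp (-w.2)) * D) /
        (Real.exp (-(p.2 + w.2) / 2) * D) with hBdef
    set C := (dist w.1 q.1 + max (Real.exp (-w.2)) (Real.exp (-q.2)) * D) /
        (Real.exp (-(w.2 + q.2) / 2) * D) with hCdef
    have hA : 0 < A := hpos p q
    have hB : 0 < B := hpos p w
    have hC : 0 < C := hpos w q
    have hABC : A ≤ B * C := by
      rw [hAdef, hBdef, hCdef, div_mul_div_comm,
        div_le_div_iff₀ (hden p q) (mul_pos (hden p w) (hden w q))]
      have hE : Real.exp (-(p.2 + w.2) / 2) * Real.exp (-(w.2 + q.2) / 2) =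
          Real.exp (-(p.2 + q.2) / 2) * Real.exp (-w.2) := by
        rw [← Real.exp_add, ← Real.exp_add]
        congr 1
        ring
      have key := hypCone_keyineq D (dist p.1 q.1) (dist p.1 w.1) (dist w.1 q.1)
        (Real.exp (-p.2)) (Real.exp (-q.2)) (Real.exp (-w.2)) hD0
        dist_nonneg dist_nonneg (dist_triangle p.1 w.1 q.1)
        (Real.exp_pos _) (Real.exp_pos _)
      calc (dist p.1 q.1 + max (Real.exp (-p.2)) (Real.exp (-q.2)) * D) *
            (Real.exp (-(p.2 + w.2) / 2) * D * (Real.exp (-(w.2 + q.2) / 2) * D))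
          = ((dist p.1 q.1 + max (Real.exp (-p.2)) (Real.exp (-q.2)) * D) *
              Real.exp (-w.2) * D) * (Real.exp (-(p.2 + q.2) / 2) * D) := by
            rw [show Real.exp (-(p.2 + w.2) / 2) * D * (Real.exp (-(w.2 + q.2) / 2) * D)
              = (Real.exp (-(p.2 + w.2) / 2) * Real.exp (-(w.2 + q.2) / 2)) * (D * D) from
              by ring, hE]
            ring
        _ ≤ ((dist p.1 w.1 + max (Real.exp (-p.2)) (Real.exp (-w.2)) * D) *
              (dist w.1 q.1 + max (Real.exp (-w.2)) (Real.exp (-q.2)) * D)) *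
              (Real.exp (-(p.2 + q.2) / 2) * D) :=
            mul_le_mul_of_nonneg_right key (hden p q).le
    have hlog : Real.log A ≤ Real.log B + Real.log C := by
      rw [← Real.log_mul (ne_of_gt hB) (ne_of_gt hC)]
      exact Real.log_le_log hA hABC
    unfold hypConeRho
    rw [← hAdef, ← hBdef, ← hCdef]
    linarith
end

section
/- For any t ≥ 0, the projection π_t : H(Z) → S_t, π_t(p,s) = (p,t), restricted to H(Z) \ B_t = Z × [t,∞), is 1-Lipschitz with respect to the hyperbolic cone metric ρ. -/
open Metric

/-- For `t ≥ 0`, the projection `π_t(p,s) = (p,t)` restricted to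
`H(Z) \ B_t = Z × [t,∞)` is `1`-Lipschitz for the hyperbolic cone metric `ρ`. -/
theorem hypCone_projection_lipschitz {Z : Type*} [MetricSpace Z]
    (hbdd : Bornology.IsBounded (Set.univ : Set Z)) (a b : Z) (hab : a ≠ b)
    (D : ℝ) (hD : D = Metric.diam (Set.univ : Set Z)) :
    ∀ t : ℝ, 0 ≤ t → ∀ p q : Z × ℝ, t ≤ p.2 → t ≤ q.2 →
      hypConeRho D (p.1, t) (q.1, t) ≤ hypConeRho D p q := by
  intro t ht p q hp hq
  have hD0 : 0 < D := by
    rw [hD]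
    calc (0:ℝ) < dist a b := dist_pos.mpr hab
      _ ≤ _ := Metric.dist_le_diam_of_mem hbdd trivial trivial
  unfold hypConeRho
  simp only [max_self]
  have hd : (0:ℝ) ≤ dist p.1 q.1 := dist_nonneg
  have hg : Real.exp (-(p.2 + q.2) / 2) ≤ Real.exp (-t) := by
    apply Real.exp_le_exp.2; linarith
  have hm : Real.exp (-(p.2 + q.2) / 2) ≤ max (Real.exp (-p.2)) (Real.exp (-q.2)) := by
    rcases le_total p.2 q.2 with h | h
    · refine le_trans ?_ (le_max_left _ _)
      apply Real.exp_le_exp.2; linarith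
    · refine le_trans ?_ (le_max_right _ _)
      apply Real.exp_le_exp.2; linarith
  have htt : -(t + t) / 2 = -t := by ring
  rw [htt]
  have h2 : (0:ℝ) ≤ 2 := by norm_num
  apply mul_le_mul_of_nonneg_left _ h2
  have hgpos : 0 < Real.exp (-(p.2 + q.2) / 2) := Real.exp_pos _
  have htpos : 0 < Real.exp (-t) := Real.exp_pos _
  apply Real.log_le_log (by positivity)
  rw [div_le_div_iff₀ (by positivity) (by positivity)]
  nlinarith [mul_nonneg hd (sub_nonneg.2 hg), mul_nonneg (mul_nonneg htpos.le (sub_nonneg.2 hm)) (mul_pos hD0 hD0).le]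
end

section
/- For every ε > 0 there exists a constant κ(ε) > 1 such that 1 + e^{−s}·t ≤ (1+t)^{κ(ε)^{−s}} for all s ≥ 0 and all t ∈ [0, e^{ε}]. -/
/-- For any `ε > 0` there exists `κ(ε) > 1` such that
`1 + e^{−s}·t ≤ (1+t)^{κ(ε)^{−s}}` for all `s ≥ 0` and `t ∈ [0, e^ε]`. -/
theorem exists_kappa_inequality :
    ∀ ε > (0:ℝ), ∃ κ : ℝ, 1 < κ ∧ ∀ s : ℝ, 0 ≤ s → ∀ t ∈ Set.Icc (0:ℝ) (Real.exp ε),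
      1 + Real.exp (-s) * t ≤ (1 + t) ^ (κ ^ (-s)) := by
  intro ε hε
  set T := Real.exp ε with hTdef
  have hT : 0 < T := Real.exp_pos ε
  set α : ℝ := 1 / (1 + T) with hαdef
  have hα0 : 0 < α := by positivity
  have hα1 : α < 1 := by
    rw [hαdef, div_lt_one (by linarith)]; linarith
  have hαT : α * T = 1 - α := by rw [hαdef]; field_simp; ring
  refine ⟨Real.exp α, by linarith [Real.add_one_le_exp α], ?_⟩
  intro s hs t ht
  obtain ⟨ht0, htT⟩ := ht
  have hκ : (Real.exp α) ^ (-s) = Real.exp (-(α * s)) := by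
    rw [← Real.exp_mul]; ring_nf
  rw [hκ]
  set u := Real.exp (-s) with hu
  set a := Real.exp (-(α * s)) with ha
  have hu0 : 0 < u := Real.exp_pos _
  have ha0 : 0 < a := Real.exp_pos _
  have ha1 : a ≤ 1 := by
    rw [ha, show (1:ℝ) = Real.exp 0 by simp]
    exact Real.exp_le_exp.mpr (by nlinarith)
  have hau : a = u * Real.exp ((1 - α) * s) := by
    rw [hu, ha, ← Real.exp_add]; ring_nf
  have h1 : u * (1 + (1 - α) * s) ≤ a := by
    rw [hau]
    have := Real.add_one_le_exp ((1 - α) * s)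
    nlinarith
  have h2 : 1 - a ≤ α * s := by
    have := Real.add_one_le_exp (-(α * s))
    linarith
  have key : u + u * (1 - a) * t ≤ a := by
    have h3 : u * (1 - a) * t ≤ u * (1 - a) * T := by
      have hn : 0 ≤ u * (1 - a) := mul_nonneg hu0.le (by linarith)
      exact mul_le_mul_of_nonneg_left htT hn
    have h4 : u * (1 - a) * T ≤ u * ((1 - α) * s) := by
      calc u * (1 - a) * T ≤ u * (α * s) * T :=
            mul_le_mul_of_nonneg_right (mul_le_mul_of_nonneg_left h2 hu0.le) hT.le
        _ = u * s * (α * T) := by ring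
        _ = u * ((1 - α) * s) := by rw [hαT]; ring
    nlinarith
  have hpos : (0:ℝ) < 1 + t := by linarith
  have hb : (1 + t) ^ (1 - a) ≤ 1 + (1 - a) * t :=
    rpow_one_add_le_one_add_mul_self (by linarith) (by linarith) (by linarith)
  have hsplit : (1 + t) ^ a * (1 + t) ^ (1 - a) = 1 + t := by
    rw [← Real.rpow_add hpos, show a + (1 - a) = (1:ℝ) by ring, Real.rpow_one]
  have hmain : (1 + u * t) * (1 + (1 - a) * t) ≤ 1 + t := by
    nlinarith [mul_nonneg ht0 (sub_nonneg.mpr key)]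
  have h5 : (1 + u * t) * (1 + t) ^ (1 - a) ≤ (1 + t) ^ a * (1 + t) ^ (1 - a) := by
    calc (1 + u * t) * (1 + t) ^ (1 - a)
        ≤ (1 + u * t) * (1 + (1 - a) * t) :=
          mul_le_mul_of_nonneg_left hb (by nlinarith)
      _ ≤ 1 + t := hmain
      _ = (1 + t) ^ a * (1 + t) ^ (1 - a) := hsplit.symm
  have hrp : 0 < (1 + t) ^ (1 - a) := Real.rpow_pos_of_pos hpos _
  exact le_of_mul_le_mul_right h5 hrp
end

section
/- If (Z,d) is a bounded uniformly coarsely connected space containing at least two points, then the slice S_r = Z × {r} with the restricted hyperbolic cone metric is ε-coarsely connected for every ε > 0; hence H(Z) \ B_r = Z × [r,∞) is uniformly coarsely connected. -/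
open Metric

namespace HypConeAux

variable {Z : Type*} [MetricSpace Z]

/-- ε-chain connectivity within the region `Z × [r,∞)`. -/
def Conn (D r ε : ℝ) (p q : Z × ℝ) : Prop :=
  ∃ (n : ℕ) (c : ℕ → Z × ℝ), c 0 = p ∧ c n = q ∧ (∀ i ≤ n, r ≤ (c i).2) ∧
    ∀ i < n, hypConeRho D (c i) (c (i + 1)) ≤ ε

lemma rho_symm (D : ℝ) (p q : Z × ℝ) : hypConeRho D p q = hypConeRho D q p := by
  unfold hypConeRho
  rw [dist_comm, max_comm, add_comm p.2 q.2]

lemma Conn_trans {D r ε : ℝ} {p q s : Z × ℝ} (h1 : Conn D r ε p q) (h2 : Conn D r ε q s) :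
    Conn D r ε p s := by
  obtain ⟨n, c, hc0, hcn, hcr, hcs⟩ := h1
  obtain ⟨m, c', hc0', hcm', hcr', hcs'⟩ := h2
  refine ⟨n + m, fun i => if i ≤ n then c i else c' (i - n), ?_, ?_, ?_, ?_⟩
  · simp [hc0]
  · by_cases h : n + m ≤ n
    · have hm : m = 0 := by omega
      show (if n + m ≤ n then c (n + m) else c' (n + m - n)) = s
      rw [if_pos h, show n + m = n by omega, hcn, ← hc0',
        show (0:ℕ) = m from hm.symm, hcm']
    · simp only [h, if_false]
      have : n + m - n = m := by omega
      rw [this, hcm']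
  · intro i hi
    by_cases h : i ≤ n
    · simpa [h] using hcr i h
    · simp only [h, if_false]
      exact hcr' (i - n) (by omega)
  · intro i hi
    by_cases h : i + 1 ≤ n
    · have h' : i ≤ n := by omega
      simpa [h, h'] using hcs i (by omega)
    · by_cases h' : i ≤ n
      · have hi' : i = n := by omega
        have hm : 0 < m := by omega
        have e1 : i + 1 - n = 1 := by omega
        simp only [h, h', if_true, if_false, e1, hi', hcn, ← hc0']
        simpa [hc0'] using hcs' 0 hm
      · have e1 : i + 1 - n = (i - n) + 1 := by omega
        simp only [h, h', if_false, e1]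
        exact hcs' (i - n) (by omega)

lemma Conn_symm {D r ε : ℝ} {p q : Z × ℝ} (h : Conn D r ε p q) : Conn D r ε q p := by
  obtain ⟨n, c, hc0, hcn, hcr, hcs⟩ := h
  refine ⟨n, fun i => c (n - i), by simpa, by simpa, fun i hi => hcr _ (by omega), ?_⟩
  intro i hi
  have e1 : n - i = (n - (i + 1)) + 1 := by omega
  show hypConeRho D (c (n - i)) (c (n - (i + 1))) ≤ ε
  rw [rho_symm D, e1]
  exact hcs _ (by omega)

lemma rho_vert {D : ℝ} (hD : 0 < D) (x : Z) (t s : ℝ) :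
    hypConeRho D (x, t) (x, s) = |t - s| := by
  unfold hypConeRho
  have hmax : max (Real.exp (-t)) (Real.exp (-s)) = Real.exp (max (-t) (-s)) :=
    (Real.exp_monotone.map_max).symm
  simp only [dist_self, zero_add, hmax]
  rw [mul_div_mul_right _ _ (ne_of_gt hD), ← Real.exp_sub, Real.log_exp]
  rcases le_total t s with h | h
  · rw [max_eq_left (by linarith), abs_of_nonpos (by linarith)]
    ring
  · rw [max_eq_right (by linarith), abs_of_nonneg (by linarith)]
    ring

lemma rho_slice_le {D : ℝ} (hD : 0 < D) {ε r : ℝ} (hε : 0 < ε) {x y : Z}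
    (h : dist x y ≤ (Real.exp (ε / 2) - 1) * (Real.exp (-r) * D)) :
    hypConeRho D (x, r) (y, r) ≤ ε := by
  unfold hypConeRho
  have hA : 0 < Real.exp (-r) * D := mul_pos (Real.exp_pos _) hD
  have e1 : max (Real.exp (-r)) (Real.exp (-r)) = Real.exp (-r) := max_self _
  have e2 : -(r + r) / 2 = -r := by ring
  simp only [e1, e2]
  set A := Real.exp (-r) * D with hAdef
  have hd : (0:ℝ) ≤ dist x y := dist_nonneg
  have hle : (dist x y + A) / A ≤ Real.exp (ε / 2) := by
    rw [div_le_iff₀ hA]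
    nlinarith
  have hpos : (0:ℝ) < (dist x y + A) / A := div_pos (by linarith) hA
  have := Real.log_le_log hpos hle
  rw [Real.log_exp] at this
  linarith

lemma Conn_vert {D : ℝ} (hD : 0 < D) {ε : ℝ} (hε : 0 < ε) (x : Z) {t r : ℝ} (hr : r ≤ t) :
    Conn D r ε (x, t) (x, r) := by
  refine ⟨⌈(t - r) / ε⌉₊, fun i => (x, max r (t - i * ε)), ?_, ?_, ?_, ?_⟩
  · simp [max_eq_right hr]
  · have h1 : (t - r) / ε ≤ (⌈(t - r) / ε⌉₊ : ℝ) := Nat.le_ceil _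
    have h2 : t - r ≤ (⌈(t - r) / ε⌉₊ : ℝ) * ε := by
      rwa [div_le_iff₀ hε] at h1
    have : t - (⌈(t - r) / ε⌉₊ : ℝ) * ε ≤ r := by linarith
    simp [max_eq_left this]
  · intro i _
    exact le_max_left _ _
  · intro i _
    rw [rho_vert hD]
    have key : |max r (t - i * ε) - max r (t - (i + 1 : ℕ) * ε)| ≤
        |(t - i * ε) - (t - (i + 1 : ℕ) * ε)| := by
      rw [max_comm r _, max_comm r _]
      exact abs_max_sub_max_le_abs _ _ _
    have e1 : |(t - i * ε) - (t - (i + 1 : ℕ) * ε)| = ε := by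
      push_cast
      rw [show (t - i * ε) - (t - (i + 1) * ε) = ε by ring]
      exact abs_of_pos hε
    calc _ ≤ _ := key
    _ ≤ ε := e1.le

end HypConeAux

/-- If `(Z,d)` is bounded, uniformly coarsely connected and has at
least two points, then every slice `S_r = Z × {r}` with the restricted cone metric is
`ε`-coarsely connected for every `ε > 0`; hence `H(Z) \ B_r = Z × [r,∞)` is uniformly
coarsely connected. -/
theorem hypCone_complement_coarselyConnected {Z : Type*} [MetricSpace Z]
    (hbdd : Bornology.IsBounded (Set.univ : Set Z)) (a b : Z) (hab : a ≠ b)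
    (D : ℝ) (hD : D = Metric.diam (Set.univ : Set Z))
    (hucc : ∀ ε > (0:ℝ), ∀ x y : Z, ∃ (n : ℕ) (c : ℕ → Z),
      c 0 = x ∧ c n = y ∧ ∀ i < n, dist (c i) (c (i + 1)) ≤ ε) :
    ∀ r : ℝ, 0 ≤ r →
      ((∀ ε > (0:ℝ), ∀ x y : Z, ∃ (n : ℕ) (c : ℕ → Z), c 0 = x ∧ c n = y ∧
        ∀ i < n, hypConeRho D (c i, r) (c (i + 1), r) ≤ ε) ∧
      (∀ ε > (0:ℝ), ∀ p q : Z × ℝ, r ≤ p.2 → r ≤ q.2 →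
        ∃ (n : ℕ) (c : ℕ → Z × ℝ), c 0 = p ∧ c n = q ∧ (∀ i ≤ n, r ≤ (c i).2) ∧
          ∀ i < n, hypConeRho D (c i) (c (i + 1)) ≤ ε)) := by
  intro r hr
  have hDpos : 0 < D := by
    rw [hD]
    have h1 : 0 < dist a b := dist_pos.mpr hab
    have h2 : dist a b ≤ Metric.diam (Set.univ : Set Z) :=
      Metric.dist_le_diam_of_mem hbdd (Set.mem_univ a) (Set.mem_univ b)
    linarith
  -- horizontal connectivity at height r
  have horiz : ∀ ε > (0:ℝ), ∀ x y : Z, ∃ (n : ℕ) (c : ℕ → Z), c 0 = x ∧ c n = y ∧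
      ∀ i < n, hypConeRho D (c i, r) (c (i + 1), r) ≤ ε := by
    intro ε hε x y
    set δ := (Real.exp (ε / 2) - 1) * (Real.exp (-r) * D) with hδ
    have hδpos : 0 < δ := by
      apply mul_pos
      · have : (1:ℝ) < Real.exp (ε / 2) := by
          rw [show (1:ℝ) = Real.exp 0 by simp]
          exact Real.exp_lt_exp.mpr (by linarith)
        linarith
      · exact mul_pos (Real.exp_pos _) hDpos
    obtain ⟨n, c, hc0, hcn, hcs⟩ := hucc δ hδpos x y
    exact ⟨n, c, hc0, hcn, fun i hi =>
      HypConeAux.rho_slice_le hDpos hε (hcs i hi)⟩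
  refine ⟨horiz, ?_⟩
  intro ε hε p q hp hq
  have hConnHoriz : HypConeAux.Conn D r ε (p.1, r) (q.1, r) := by
    obtain ⟨n, c, hc0, hcn, hcs⟩ := horiz ε hε p.1 q.1
    exact ⟨n, fun i => (c i, r), by simp [hc0], by simp [hcn],
      fun i _ => le_refl r, fun i hi => hcs i hi⟩
  have h1 : HypConeAux.Conn D r ε p (p.1, r) := by
    have := HypConeAux.Conn_vert hDpos hε p.1 hp
    simpa using this
  have h3 : HypConeAux.Conn D r ε (q.1, r) q := by
    have := HypConeAux.Conn_symm (HypConeAux.Conn_vert hDpos hε q.1 hq)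
    simpa using this
  exact HypConeAux.Conn_trans (HypConeAux.Conn_trans h1 hConnHoriz) h3
end

section
/- With notation as below, for all x,y ∈ Z, r ≥ 0, and t ≥ 0: ρ_{r+t}((x,r+t),(y,r+t)) ≥ κ(L)^t · ρ_r((x,r),(y,r)), where κ(L) > 1 is a constant such that 1 + e^{−s}u ≤ (1+u)^{κ(L)^{−s}} for all s ≥ 0, u ∈ [0,e^L]. -/
open Metric

/-- The set of lengths of admissible `L`-chains from `x` to `y` staying in
`H(Z) \ B_r = Z × [r,∞)`. -/
noncomputable def chainSums {Z : Type*} [MetricSpace Z] (D L r : ℝ) (x y : Z × ℝ) :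
    Set ℝ :=
  {S | ∃ (n : ℕ) (c : ℕ → Z × ℝ), c 0 = x ∧ c n = y ∧ (∀ i ≤ n, r ≤ (c i).2) ∧
    (∀ i < n, hypConeRho D (c i) (c (i + 1)) ≤ L) ∧
    S = ∑ i ∈ Finset.range n, hypConeRho D (c i) (c (i + 1))}

/-- The chain metric `ρ_r` on `H(Z) \ B_r`. -/
noncomputable def chainDist {Z : Type*} [MetricSpace Z] (D L r : ℝ) (x y : Z × ℝ) : ℝ :=
  sInf (chainSums D L r x y)

lemma rho_eq {Z : Type*} [MetricSpace Z] {D : ℝ} (hD : 0 < D) (p q : Z × ℝ) :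
    hypConeRho D p q =
      |p.2 - q.2| + 2 * Real.log (1 + Real.exp (min p.2 q.2) * dist p.1 q.1 / D) := by
  have hmax : max (Real.exp (-p.2)) (Real.exp (-q.2)) = Real.exp (-(min p.2 q.2)) := by
    rcases le_total p.2 q.2 with h | h
    · rw [min_eq_left h, max_eq_left (Real.exp_le_exp.2 (neg_le_neg h))]
    · rw [min_eq_right h, max_eq_right (Real.exp_le_exp.2 (neg_le_neg h))]
  set m := min p.2 q.2 with hm
  set d := dist p.1 q.1 with hd
  have hd0 : 0 ≤ d := dist_nonneg
  have harg : (d + Real.exp (-m) * D) / (Real.exp (-(p.2 + q.2) / 2) * D)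
      = Real.exp ((p.2 + q.2) / 2 - m) * (1 + Real.exp m * d / D) := by
    have e1 : Real.exp ((p.2 + q.2) / 2 - m) * Real.exp (-(p.2 + q.2) / 2) = Real.exp (-m) := by
      rw [← Real.exp_add]; congr 1; ring
    have e2 : Real.exp (-m) * Real.exp m = 1 := by rw [← Real.exp_add]; simp
    have e3 : (1 + Real.exp m * d / D) = (D + Real.exp m * d) / D := by field_simp
    rw [e3, ← mul_div_assoc, div_eq_div_iff (by positivity) hD.ne']
    linear_combination (-(D + Real.exp m * d)) * D * e1 + (-d) * D * e2
  rw [hypConeRho, hmax, harg, Real.log_mul (Real.exp_ne_zero _) (by positivity),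
    Real.log_exp]
  have habs : (p.2 + q.2) / 2 - m = |p.2 - q.2| / 2 := by
    rcases le_total p.2 q.2 with h | h
    · rw [hm, min_eq_left h, abs_of_nonpos (by linarith)]; ring
    · rw [hm, min_eq_right h, abs_of_nonneg (by linarith)]; ring
  rw [habs]; ring

lemma rho_nonneg {Z : Type*} [MetricSpace Z] {D : ℝ} (hD : 0 < D) (p q : Z × ℝ) :
    0 ≤ hypConeRho D p q := by
  rw [rho_eq hD]
  have h1 : (0:ℝ) ≤ Real.log (1 + Real.exp (min p.2 q.2) * dist p.1 q.1 / D) :=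
    Real.log_nonneg (by
      have : 0 ≤ Real.exp (min p.2 q.2) * dist p.1 q.1 / D := by positivity
      linarith)
  have h2 : (0:ℝ) ≤ |p.2 - q.2| := abs_nonneg _
  linarith

lemma proj_link {Z : Type*} [MetricSpace Z] {D κ L r t : ℝ} (hD : 0 < D) (hκ1 : 1 < κ)
    (hκ : ∀ s : ℝ, 0 ≤ s → ∀ u ∈ Set.Icc (0:ℝ) (Real.exp L),
      1 + Real.exp (-s) * u ≤ (1 + u) ^ (κ ^ (-s)))
    (hr : 0 ≤ r) (ht : 0 ≤ t) {p q : Z × ℝ}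
    (hp : r + t ≤ p.2) (hq : r + t ≤ q.2) (hpq : hypConeRho D p q ≤ L) :
    hypConeRho D (p.1, r + κ ^ (-t) * (p.2 - (r + t))) (q.1, r + κ ^ (-t) * (q.2 - (r + t)))
      ≤ κ ^ (-t) * hypConeRho D p q := by
  have hκ0 : (0:ℝ) < κ := lt_trans one_pos hκ1
  have hκt0 : (0:ℝ) < κ ^ (-t) := Real.rpow_pos_of_pos hκ0 _
  have hκt1 : κ ^ (-t) ≤ 1 := Real.rpow_le_one_of_one_le_of_nonpos hκ1.le (neg_nonpos.2 ht)
  set d := dist p.1 q.1 with hd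
  have hd0 : 0 ≤ d := dist_nonneg
  set m := min p.2 q.2 with hm
  set u := Real.exp m * d / D with hu
  have hu0 : 0 ≤ u := by positivity
  -- L is nonneg and u ≤ exp L
  have hρ : hypConeRho D p q = |p.2 - q.2| + 2 * Real.log (1 + u) := rho_eq hD p q
  have hlog0 : 0 ≤ Real.log (1 + u) := Real.log_nonneg (by linarith)
  have habs0 : 0 ≤ |p.2 - q.2| := abs_nonneg _
  have hL0 : 0 ≤ L := le_trans (rho_nonneg hD p q) hpq
  have hlogL : Real.log (1 + u) ≤ L := by
    have : 2 * Real.log (1 + u) ≤ L := by rw [hρ] at hpq; linarith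
    linarith
  have huL : u ≤ Real.exp L := by
    have h1 : 1 + u ≤ Real.exp L := by
      have := Real.exp_le_exp.2 hlogL
      rwa [Real.exp_log (by linarith)] at this
    linarith
  have hkey : 1 + Real.exp (-t) * u ≤ (1 + u) ^ (κ ^ (-t)) := hκ t ht u ⟨hu0, huL⟩
  -- heights of projected points
  have hmin : min (r + κ ^ (-t) * (p.2 - (r + t))) (r + κ ^ (-t) * (q.2 - (r + t)))
      = r + κ ^ (-t) * (m - (r + t)) := by
    rcases le_total p.2 q.2 with h | h
    · rw [hm, min_eq_left h, min_eq_left (by nlinarith)]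
    · rw [hm, min_eq_right h, min_eq_right (by nlinarith)]
  have habs : |(r + κ ^ (-t) * (p.2 - (r + t))) - (r + κ ^ (-t) * (q.2 - (r + t)))|
      = κ ^ (-t) * |p.2 - q.2| := by
    rw [show (r + κ ^ (-t) * (p.2 - (r + t))) - (r + κ ^ (-t) * (q.2 - (r + t)))
        = κ ^ (-t) * (p.2 - q.2) from by ring, abs_mul, abs_of_pos hκt0]
  have hm' : r + κ ^ (-t) * (m - (r + t)) ≤ m - t := by
    have hmrt : r + t ≤ m := le_min hp hq
    nlinarith
  have hmono : Real.exp (r + κ ^ (-t) * (m - (r + t))) * d / D ≤ Real.exp (-t) * u := by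
    have h1 : Real.exp (r + κ ^ (-t) * (m - (r + t))) ≤ Real.exp (m - t) :=
      Real.exp_le_exp.2 hm'
    have h2 : Real.exp (m - t) = Real.exp (-t) * Real.exp m := by
      rw [← Real.exp_add]; congr 1; ring
    calc Real.exp (r + κ ^ (-t) * (m - (r + t))) * d / D
        ≤ Real.exp (m - t) * d / D := by gcongr
      _ = Real.exp (-t) * u := by rw [h2, hu]; ring
  rw [rho_eq hD, hρ]
  simp only
  rw [hmin, habs]
  have hloglog : Real.log (1 + Real.exp (r + κ ^ (-t) * (m - (r + t))) * d / D)
      ≤ κ ^ (-t) * Real.log (1 + u) := by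
    have h1 : 1 + Real.exp (r + κ ^ (-t) * (m - (r + t))) * d / D ≤ (1 + u) ^ (κ ^ (-t)) :=
      le_trans (by linarith) hkey
    have h2 := Real.log_le_log (by positivity) h1
    rwa [Real.log_rpow (by linarith)] at h2
  linarith

/-- For all `x, y ∈ Z`, `r ≥ 0` and `t ≥ 0`:
`ρ_{r+t}((x,r+t),(y,r+t)) ≥ κ(L)^t · ρ_r((x,r),(y,r))`, where `κ(L) > 1` satisfies
`1 + e^{−s}u ≤ (1+u)^{κ(L)^{−s}}` for all `s ≥ 0` and `u ∈ [0, e^L]`. -/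
theorem chainDist_expansion {Z : Type*} [MetricSpace Z]
    (hbdd : Bornology.IsBounded (Set.univ : Set Z)) (a b : Z) (hab : a ≠ b)
    (D : ℝ) (hD : D = Metric.diam (Set.univ : Set Z))
    (hucc : ∀ ε > (0:ℝ), ∀ x y : Z, ∃ (n : ℕ) (c : ℕ → Z),
      c 0 = x ∧ c n = y ∧ ∀ i < n, dist (c i) (c (i + 1)) ≤ ε)
    (μ : ℝ) (hμ : 0 ≤ μ)
    (hrough : ∀ p q : Z × ℝ, 0 ≤ p.2 → 0 ≤ q.2 →
      ∃ γ : ℝ → Z × ℝ, γ 0 = p ∧ γ (hypConeRho D p q) = q ∧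
        (∀ u ∈ Set.Icc 0 (hypConeRho D p q), 0 ≤ (γ u).2) ∧
        ∀ s ∈ Set.Icc 0 (hypConeRho D p q), ∀ t ∈ Set.Icc 0 (hypConeRho D p q),
          abs (hypConeRho D (γ s) (γ t) - |s - t|) ≤ 2 * μ)
    (L : ℝ) (hL : L = 1 + 2 * μ)
    (κ : ℝ) (hκ1 : 1 < κ)
    (hκ : ∀ s : ℝ, 0 ≤ s → ∀ u ∈ Set.Icc (0:ℝ) (Real.exp L),
      1 + Real.exp (-s) * u ≤ (1 + u) ^ (κ ^ (-s))) :
    ∀ (x y : Z) (r t : ℝ), 0 ≤ r → 0 ≤ t →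
      κ ^ t * chainDist D L r (x, r) (y, r) ≤
        chainDist D L (r + t) (x, r + t) (y, r + t) := by
  intro x y r t hr ht
  have hD0 : 0 < D := by
    rw [hD]
    have h1 : 0 < dist a b := dist_pos.2 hab
    have h2 : dist a b ≤ Metric.diam (Set.univ : Set Z) :=
      Metric.dist_le_diam_of_mem hbdd (Set.mem_univ a) (Set.mem_univ b)
    linarith
  have hL0 : 0 < L := by rw [hL]; linarith
  have hκ0 : (0:ℝ) < κ := lt_trans one_pos hκ1
  have hκt : 0 < κ ^ t := Real.rpow_pos_of_pos hκ0 t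
  have hκnt : 0 < κ ^ (-t) := Real.rpow_pos_of_pos hκ0 _
  have hκle1 : κ ^ (-t) ≤ 1 := Real.rpow_le_one_of_one_le_of_nonpos hκ1.le (neg_nonpos.2 ht)
  have hκmul : κ ^ t * κ ^ (-t) = 1 := by rw [← Real.rpow_add hκ0]; simp
  have hbdl : ∀ r' (x' y' : Z × ℝ), BddBelow (chainSums D L r' x' y') := by
    intro r' x' y'
    refine ⟨0, ?_⟩
    rintro S ⟨n, c, -, -, -, -, rfl⟩
    exact Finset.sum_nonneg fun i _ => rho_nonneg hD0 _ _
  -- nonemptiness at level r + t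
  have hε : 0 < D * (Real.exp (L/2) - 1) * Real.exp (-(r+t)) := by
    have h1 : 1 < Real.exp (L/2) := by
      rw [← Real.exp_zero]; exact Real.exp_lt_exp.2 (by linarith)
    have h2 : 0 < Real.exp (-(r+t)) := Real.exp_pos _
    exact mul_pos (mul_pos hD0 (by linarith)) h2
  obtain ⟨n₀, c₀, hc0, hcn, hstep⟩ :=
    hucc (D * (Real.exp (L/2) - 1) * Real.exp (-(r+t))) hε x y
  have hne : (chainSums D L (r+t) (x, r+t) (y, r+t)).Nonempty := by
    refine ⟨_, n₀, fun i => (c₀ i, r+t), by simp [hc0], by simp [hcn],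
      fun i _ => le_refl _, ?_, rfl⟩
    intro i hi
    rw [rho_eq hD0]
    simp only [sub_self, abs_zero, zero_add, min_self]
    have hdi := hstep i hi
    have hd0 : 0 ≤ dist (c₀ i) (c₀ (i+1)) := dist_nonneg
    have hub : Real.exp (r+t) * dist (c₀ i) (c₀ (i+1)) / D ≤ Real.exp (L/2) - 1 := by
      calc Real.exp (r+t) * dist (c₀ i) (c₀ (i+1)) / D
          ≤ Real.exp (r+t) * (D * (Real.exp (L/2) - 1) * Real.exp (-(r+t))) / D := by
            gcongr
        _ = (Real.exp (r+t) * Real.exp (-(r+t))) * (Real.exp (L/2) - 1) * (D / D) := by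
            ring
        _ = Real.exp (L/2) - 1 := by
            have he : (r+t) + -(r+t) = 0 := by ring
            rw [← Real.exp_add, he, Real.exp_zero, one_mul, div_self hD0.ne', mul_one]
    have hpos : (0:ℝ) ≤ Real.exp (r+t) * dist (c₀ i) (c₀ (i+1)) / D := by positivity
    have hlog : Real.log (1 + Real.exp (r+t) * dist (c₀ i) (c₀ (i+1)) / D) ≤ L/2 := by
      have h3 := Real.log_le_log (by linarith)
        (show 1 + Real.exp (r+t) * dist (c₀ i) (c₀ (i+1)) / D ≤ Real.exp (L/2) by linarith)
      rwa [Real.log_exp] at h3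
    linarith
  apply le_csInf hne
  rintro S ⟨n, c, hc0', hcn', hht, hlink, rfl⟩
  set π : Z × ℝ → Z × ℝ := fun p => (p.1, r + κ ^ (-t) * (p.2 - (r+t))) with hπ
  have hlinkle : ∀ i < n, hypConeRho D (π (c i)) (π (c (i+1)))
      ≤ κ ^ (-t) * hypConeRho D (c i) (c (i+1)) := by
    intro i hi
    exact proj_link hD0 hκ1 hκ hr ht (hht i hi.le) (hht (i+1) hi) (hlink i hi)
  have hmem : (∑ i ∈ Finset.range n, hypConeRho D (π (c i)) (π (c (i+1))))
      ∈ chainSums D L r (x, r) (y, r) := by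
    refine ⟨n, fun i => π (c i), ?_, ?_, ?_, ?_, rfl⟩
    · show π (c 0) = (x, r)
      rw [hc0']; simp [hπ]
    · show π (c n) = (y, r)
      rw [hcn']; simp [hπ]
    · intro i hi
      have h1 := hht i hi
      have : 0 ≤ κ ^ (-t) * ((c i).2 - (r+t)) := mul_nonneg hκnt.le (by linarith)
      simp only [hπ]
      linarith
    · intro i hi
      have h1 := hlinkle i hi
      have h2 := hlink i hi
      have h3 := rho_nonneg hD0 (c i) (c (i+1))
      nlinarith
  have hle : chainDist D L r (x, r) (y, r)
      ≤ ∑ i ∈ Finset.range n, hypConeRho D (π (c i)) (π (c (i+1))) :=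
    csInf_le (hbdl _ _ _) hmem
  have hsum : (∑ i ∈ Finset.range n, hypConeRho D (π (c i)) (π (c (i+1))))
      ≤ κ ^ (-t) * ∑ i ∈ Finset.range n, hypConeRho D (c i) (c (i+1)) := by
    rw [Finset.mul_sum]
    exact Finset.sum_le_sum fun i hi => hlinkle i (Finset.mem_range.1 hi)
  have h4 : κ ^ t * chainDist D L r (x, r) (y, r)
      ≤ κ ^ t * (κ ^ (-t) * ∑ i ∈ Finset.range n, hypConeRho D (c i) (c (i+1))) :=
    mul_le_mul_of_nonneg_left (hle.trans hsum) hκt.le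
  rwa [← mul_assoc, hκmul, one_mul] at h4
end

section
/- With notation as below, for y = (p,r) ∈ H(Z) and any t ≥ 2L, the ball B((p,r+t), t/(2L)) in (H(Z),ρ) is contained in A_y^{t/2} × [r, r+2t], where A_y^{t/2} = {x ∈ S_r : ρ_r(y,x) < t/2}. -/
open Metric

lemma hypConeRho_abs_le' {Z : Type*} [MetricSpace Z] {D : ℝ} (hD : 0 < D) (x y : Z × ℝ) :
    |x.2 - y.2| ≤ hypConeRho D x y := by
  have hden : 0 < Real.exp (-(x.2 + y.2) / 2) * D := by positivity
  have hexp : Real.exp (|x.2 - y.2| / 2) * Real.exp (-(x.2 + y.2) / 2) =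
      Real.exp (max (-x.2) (-y.2)) := by
    rw [← Real.exp_add]
    congr 1
    rcases le_total x.2 y.2 with h | h
    · rw [abs_of_nonpos (by linarith), max_eq_left (by linarith)]; ring
    · rw [abs_of_nonneg (by linarith), max_eq_right (by linarith)]; ring
  have hmax : Real.exp (max (-x.2) (-y.2)) ≤ max (Real.exp (-x.2)) (Real.exp (-y.2)) :=
    le_of_eq (Real.exp_monotone.map_max)
  have hkey : Real.exp (|x.2 - y.2| / 2) ≤
      (dist x.1 y.1 + max (Real.exp (-x.2)) (Real.exp (-y.2)) * D) /
        (Real.exp (-(x.2 + y.2) / 2) * D) := by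
    rw [le_div_iff₀ hden]
    have h1 : Real.exp (|x.2 - y.2| / 2) * (Real.exp (-(x.2 + y.2) / 2) * D)
        = Real.exp (max (-x.2) (-y.2)) * D := by rw [← mul_assoc, hexp]
    rw [h1]
    nlinarith [dist_nonneg (x := x.1) (y := y.1), hD, hmax]
  have hpos : 0 < (dist x.1 y.1 + max (Real.exp (-x.2)) (Real.exp (-y.2)) * D) /
      (Real.exp (-(x.2 + y.2) / 2) * D) := lt_of_lt_of_le (Real.exp_pos _) hkey
  have hlog := (Real.le_log_iff_exp_le hpos).mpr hkey
  unfold hypConeRho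
  linarith

lemma hypConeRho_nonneg' {Z : Type*} [MetricSpace Z] {D : ℝ} (hD : 0 < D) (x y : Z × ℝ) :
    0 ≤ hypConeRho D x y := (abs_nonneg _).trans (hypConeRho_abs_le' hD x y)
/-- For `y = (p,r) ∈ H(Z)` and `t ≥ 2L`, the ball
`B((p,r+t), t/(2L))` in `(H(Z),ρ)` is contained in `A_y^{t/2} × [r, r+2t]`, where
`A_y^{t/2} = {x ∈ S_r : ρ_r(y,x) < t/2}`. -/
theorem hypCone_ball_in_shadow {Z : Type*} [MetricSpace Z]
    (hbdd : Bornology.IsBounded (Set.univ : Set Z)) (a b : Z) (hab : a ≠ b)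
    (D : ℝ) (hD : D = Metric.diam (Set.univ : Set Z))
    (hucc : ∀ ε > (0:ℝ), ∀ x y : Z, ∃ (n : ℕ) (c : ℕ → Z),
      c 0 = x ∧ c n = y ∧ ∀ i < n, dist (c i) (c (i + 1)) ≤ ε)
    (μ : ℝ) (hμ : 0 ≤ μ)
    (hrough : ∀ p q : Z × ℝ, 0 ≤ p.2 → 0 ≤ q.2 →
      ∃ γ : ℝ → Z × ℝ, γ 0 = p ∧ γ (hypConeRho D p q) = q ∧
        (∀ u ∈ Set.Icc 0 (hypConeRho D p q), 0 ≤ (γ u).2) ∧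
        ∀ s ∈ Set.Icc 0 (hypConeRho D p q), ∀ t ∈ Set.Icc 0 (hypConeRho D p q),
          abs (hypConeRho D (γ s) (γ t) - |s - t|) ≤ 2 * μ)
    (L : ℝ) (hL : L = 1 + 2 * μ)
    (κ : ℝ) (hκ1 : 1 < κ)
    (hκ : ∀ s : ℝ, 0 ≤ s → ∀ u ∈ Set.Icc (0:ℝ) (Real.exp L),
      1 + Real.exp (-s) * u ≤ (1 + u) ^ (κ ^ (-s))) :
    ∀ (p : Z) (r t : ℝ), 0 ≤ r → 2 * L ≤ t → ∀ z : Z × ℝ, 0 ≤ z.2 →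
      hypConeRho D (p, r + t) z < t / (2 * L) →
        chainDist D L r (p, r) (z.1, r) < t / 2 ∧ r ≤ z.2 ∧ z.2 ≤ r + 2 * t := by
  intro p r t hr ht z hz H
  have hD0 : 0 < D := by
    rw [hD]
    exact lt_of_lt_of_le (dist_pos.mpr hab)
      (dist_le_diam_of_mem hbdd (Set.mem_univ a) (Set.mem_univ b))
  have hL1 : 1 ≤ L := by rw [hL]; linarith
  have ht2 : 2 ≤ t := by nlinarith
  have htL : t / (2 * L) ≤ t / 2 := by
    apply div_le_div_of_nonneg_left (by linarith) (by linarith) (by linarith)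
  have h1 : |r + t - z.2| ≤ hypConeRho D (p, r + t) z := hypConeRho_abs_le' hD0 (p, r + t) z
  have habs : |r + t - z.2| < t / 2 := lt_of_le_of_lt h1 (lt_of_lt_of_le H htL)
  obtain ⟨ha1, ha2⟩ := abs_lt.mp habs
  set d := dist p z.1 with hd
  have hdd : 0 ≤ d := dist_nonneg
  have hden : 0 < Real.exp (-((r + t) + z.2) / 2) * D := by positivity
  have hQpos : 0 < (d + max (Real.exp (-(r + t))) (Real.exp (-z.2)) * D) /
      (Real.exp (-((r + t) + z.2) / 2) * D) := by
    apply div_pos _ hden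
    have : 0 < max (Real.exp (-(r + t))) (Real.exp (-z.2)) * D := by positivity
    linarith
  have H2 : 2 * Real.log ((d + max (Real.exp (-(r + t))) (Real.exp (-z.2)) * D) /
      (Real.exp (-((r + t) + z.2) / 2) * D)) < t / (2 * L) := H
  have hsplit : t / (2 * L) = 2 * (t / (4 * L)) := by field_simp; ring
  have H3 : Real.log ((d + max (Real.exp (-(r + t))) (Real.exp (-z.2)) * D) /
      (Real.exp (-((r + t) + z.2) / 2) * D)) < t / (4 * L) := by
    rw [hsplit] at H2; linarith
  have H4 : (d + max (Real.exp (-(r + t))) (Real.exp (-z.2)) * D) /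
      (Real.exp (-((r + t) + z.2) / 2) * D) < Real.exp (t / (4 * L)) := by
    rw [← Real.exp_log hQpos]
    exact Real.exp_lt_exp.mpr H3
  rw [div_lt_iff₀ hden] at H4
  have hM : 0 < max (Real.exp (-(r + t))) (Real.exp (-z.2)) * D := by positivity
  have H5 : d < Real.exp (t / (4 * L)) * (Real.exp (-((r + t) + z.2) / 2) * D) := by linarith
  have he1 : Real.exp (t / (4 * L)) ≤ Real.exp (t / 4) := by
    apply Real.exp_le_exp.mpr
    apply div_le_div_of_nonneg_left (by linarith) (by linarith) (by linarith)
  have he2 : Real.exp (-((r + t) + z.2) / 2) ≤ Real.exp (-r - 3 * t / 4) := by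
    apply Real.exp_le_exp.mpr; linarith
  have hdlt : d < Real.exp (-r - t / 2) * D := by
    have hcomb : Real.exp (t / 4) * Real.exp (-r - 3 * t / 4) = Real.exp (-r - t / 2) := by
      rw [← Real.exp_add]; ring_nf
    calc d < Real.exp (t / (4 * L)) * (Real.exp (-((r + t) + z.2) / 2) * D) := H5
      _ ≤ Real.exp (t / 4) * (Real.exp (-r - 3 * t / 4) * D) := by
          have h9 := (Real.exp_pos (-((r + t) + z.2) / 2)).le
          gcongr
      _ = Real.exp (-r - t / 2) * D := by rw [← mul_assoc, hcomb]
  -- the one-step chain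
  have hρ0 : hypConeRho D (p, r) (z.1, r) =
      2 * Real.log ((d + Real.exp (-r) * D) / (Real.exp (-r) * D)) := by
    unfold hypConeRho
    norm_num [max_self, hd]
  have hrpos : 0 < (d + Real.exp (-r) * D) / (Real.exp (-r) * D) := by
    apply div_pos _ (by positivity)
    have : 0 < Real.exp (-r) * D := by positivity
    linarith
  have hratio : (d + Real.exp (-r) * D) / (Real.exp (-r) * D) < 1 + Real.exp (-t / 2) := by
    rw [div_lt_iff₀ (by positivity)]
    have hx : Real.exp (-r - t / 2) = Real.exp (-t / 2) * Real.exp (-r) := by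
      rw [← Real.exp_add]; ring_nf
    nlinarith [Real.exp_pos (-r), Real.exp_pos (-t / 2)]
  have hlog := Real.log_le_sub_one_of_pos hrpos
  have hsmallexp : Real.exp (-t / 2) < 1 / 2 := by
    have h2e : (2:ℝ) < Real.exp 1 := lt_trans (by norm_num) Real.exp_one_gt_d9
    have hinv : Real.exp (-1 : ℝ) < 1 / 2 := by
      rw [Real.exp_neg]
      rw [inv_lt_comm₀ (Real.exp_pos 1) (by norm_num)]
      linarith
    have hle : Real.exp (-t / 2) ≤ Real.exp (-1 : ℝ) :=
      Real.exp_le_exp.mpr (by linarith)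
    linarith
  have hρsmall : hypConeRho D (p, r) (z.1, r) < 1 := by
    rw [hρ0]; linarith
  have hmem : hypConeRho D (p, r) (z.1, r) ∈ chainSums D L r (p, r) (z.1, r) := by
    refine ⟨1, fun i => if i = 0 then (p, r) else (z.1, r), rfl, rfl, ?_, ?_, ?_⟩
    · intro i _
      by_cases h : i = 0 <;> simp [h]
    · intro i hi
      have hi0 : i = 0 := by omega
      subst hi0
      norm_num
      linarith
    · norm_num [Finset.sum_range_one]
  have hbdd' : BddBelow (chainSums D L r (p, r) (z.1, r)) := by
    refine ⟨0, fun S hS => ?_⟩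
    obtain ⟨n, c, -, -, -, -, rfl⟩ := hS
    exact Finset.sum_nonneg fun i _ => hypConeRho_nonneg' hD0 _ _
  have hci := csInf_le hbdd' hmem
  exact ⟨lt_of_le_of_lt hci (by linarith), by linarith, by linarith⟩
end
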